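/- Affine-invariant Newton–Kantorovich theorem (uniqueness part): Let X and Y be real Banach spaces, û ∈ X, and α, β, δ > 0. Let D be the open ball in X of radius 2α + δ centered at û. Let F : X → Y and F' : X → L(X, Y) be maps such that F has Fréchet derivative F'(v) at every point v ∈ D. Suppose there is a continuous linear equivalence A : X ≃ Y whose underlying continuous linear map equals F'(û), and that: ‖A⁻¹(F(û))‖ ≤ α; ‖A⁻¹ ∘ (F'(v) − F'(w))‖_{L(X,X)} ≤ β‖v − w‖ for all v, w ∈ D; and αβ ≤ 1/2. Then any two points u₁, u₂ lying in the closed ball of radius 2α centered at û and satisfying F(u₁) = 0 and F(u₂) = 0 are equal. -/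

import Mathlib

open Metric Set intervalIntegral

lemma nk_key {X Y : Type*} [NormedAddCommGroup X] [NormedSpace ℝ X] [CompleteSpace X]
    [NormedAddCommGroup Y] [NormedSpace ℝ Y]
    (uhat : X) (α β δ : ℝ) (hα : 0 < α) (hβ : 0 < β) (hδ : 0 < δ)
    (F : X → Y) (F' : X → X →L[ℝ] Y)
    (hderiv : ∀ v ∈ Metric.ball uhat (2 * α + δ), HasFDerivAt F (F' v) v)
    (A : X ≃L[ℝ] Y) (hA : (A : X →L[ℝ] Y) = F' uhat)
    (hβ' : ∀ v ∈ Metric.ball uhat (2 * α + δ), ∀ w ∈ Metric.ball uhat (2 * α + δ),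
      ‖(A.symm : Y →L[ℝ] X).comp (F' v - F' w)‖ ≤ β * ‖v - w‖)
    (a b : X) (ha : a ∈ Metric.closedBall uhat (2 * α)) (hb : b ∈ Metric.closedBall uhat (2 * α)) :
    ‖(b - a) - (A.symm : Y →L[ℝ] X) (F b - F a)‖
      ≤ β * ((‖a - uhat‖ + ‖b - uhat‖) / 2) * ‖b - a‖ := by
  set T : Y →L[ℝ] X := (A.symm : Y →L[ℝ] X) with hT
  set ra := ‖a - uhat‖ with hra
  set rb := ‖b - uhat‖ with hrb
  have h01 : (0:ℝ) ≤ 1 := zero_le_one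
  have hra2 : ra ≤ 2 * α := by rwa [Metric.mem_closedBall, dist_eq_norm] at ha
  have hrb2 : rb ≤ 2 * α := by rwa [Metric.mem_closedBall, dist_eq_norm] at hb
  set c : ℝ → X := fun t => a + t • (b - a) with hc
  have hseg : ∀ t ∈ Icc (0:ℝ) 1, ‖c t - uhat‖ ≤ (1 - t) * ra + t * rb := by
    intro t ht
    have heq : c t - uhat = (1 - t) • (a - uhat) + t • (b - uhat) := by
      simp only [hc]; module
    rw [heq]
    calc ‖(1 - t) • (a - uhat) + t • (b - uhat)‖
        ≤ ‖(1 - t) • (a - uhat)‖ + ‖t • (b - uhat)‖ := norm_add_le _ _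
      _ = (1 - t) * ra + t * rb := by
          rw [norm_smul, norm_smul, Real.norm_eq_abs, Real.norm_eq_abs,
            abs_of_nonneg (by linarith [ht.2]), abs_of_nonneg ht.1]
  have hmem : ∀ t ∈ Icc (0:ℝ) 1, c t ∈ Metric.ball uhat (2 * α + δ) := by
    intro t ht
    rw [Metric.mem_ball, dist_eq_norm]
    have := hseg t ht
    nlinarith [ht.1, ht.2]
  -- derivative
  have hder : ∀ t ∈ Icc (0:ℝ) 1,
      HasDerivAt (fun s => c s - T (F (c s)))
        ((T.comp (F' uhat - F' (c t))) (b - a)) t := by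
    intro t ht
    have hcder : HasDerivAt c (b - a) t := by
      exact (by simpa using (hasDerivAt_id t).smul_const (b - a) :
        HasDerivAt (fun s : ℝ => s • (b - a)) (b - a) t).const_add a
    have hF : HasDerivAt (fun s => F (c s)) (F' (c t) (b - a)) t :=
      (hderiv _ (hmem t ht)).comp_hasDerivAt t hcder
    have hAF : HasDerivAt (fun s => T (F (c s))) (T (F' (c t) (b - a))) t :=
      T.hasFDerivAt.comp_hasDerivAt t hF
    have h := hcder.sub hAF
    convert h using 1
    · rfl
    have hTA : T ((F' uhat) (b - a)) = b - a := by
      rw [← hA]; exact A.symm_apply_apply (b - a)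
    rw [ContinuousLinearMap.comp_apply, ContinuousLinearMap.sub_apply, map_sub, hTA]
  -- continuity of the derivative
  have hlip : ∀ t ∈ Icc (0:ℝ) 1, ∀ s ∈ Icc (0:ℝ) 1,
      ‖(T.comp (F' uhat - F' (c t))) - (T.comp (F' uhat - F' (c s)))‖ ≤ β * ‖b - a‖ * |t - s| := by
    intro t ht s hs
    have heq : (T.comp (F' uhat - F' (c t))) - (T.comp (F' uhat - F' (c s)))
        = T.comp (F' (c s) - F' (c t)) := by
      rw [← ContinuousLinearMap.comp_sub]; congr 1; abel
    rw [heq]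
    have := hβ' _ (hmem s hs) _ (hmem t ht)
    have hcs : c s - c t = (s - t) • (b - a) := by simp only [hc]; module
    calc ‖T.comp (F' (c s) - F' (c t))‖ ≤ β * ‖c s - c t‖ := this
      _ = β * ‖b - a‖ * |t - s| := by
          rw [hcs, norm_smul, Real.norm_eq_abs, abs_sub_comm]; ring
  have hcont : ContinuousOn (fun t => (T.comp (F' uhat - F' (c t))) (b - a)) (Icc (0:ℝ) 1) := by
    have hcont' : ContinuousOn (fun t => T.comp (F' uhat - F' (c t))) (Icc (0:ℝ) 1) := by
      apply LipschitzOnWith.continuousOn (K := (β * ‖b - a‖).toNNReal)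
      rw [lipschitzOnWith_iff_dist_le_mul]
      intro t ht s hs
      rw [dist_eq_norm, dist_eq_norm]
      have := hlip t ht s hs
      rw [Real.coe_toNNReal _ (by positivity)]
      calc ‖T.comp (F' uhat - F' (c t)) - T.comp (F' uhat - F' (c s))‖
          ≤ β * ‖b - a‖ * |t - s| := this
        _ = β * ‖b - a‖ * ‖t - s‖ := by rw [Real.norm_eq_abs]
    exact hcont'.clm_apply continuousOn_const
  have hint : IntervalIntegrable (fun t => (T.comp (F' uhat - F' (c t))) (b - a))
      MeasureTheory.volume 0 1 := by
    apply ContinuousOn.intervalIntegrable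
    rwa [Set.uIcc_of_le h01]
  -- FTC
  have hftc : (∫ t in (0:ℝ)..1, (T.comp (F' uhat - F' (c t))) (b - a))
      = (c 1 - T (F (c 1))) - (c 0 - T (F (c 0))) := by
    apply intervalIntegral.integral_eq_sub_of_hasDerivAt (f := fun s => c s - T (F (c s)))
      (fun t ht => hder t (by rwa [Set.uIcc_of_le h01] at ht)) hint
  have hc1 : c 1 = b := by simp [hc]
  have hc0 : c 0 = a := by simp [hc]
  have heq2 : (b - a) - T (F b - F a) = ∫ t in (0:ℝ)..1, (T.comp (F' uhat - F' (c t))) (b - a) := by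
    rw [hftc, hc1, hc0, map_sub]; abel
  rw [heq2]
  -- bound
  have hbound : ∀ t ∈ Set.Ioc (0:ℝ) 1,
      ‖(T.comp (F' uhat - F' (c t))) (b - a)‖ ≤ β * ‖b - a‖ * ((1 - t) * ra + t * rb) := by
    intro t ht
    have ht' : t ∈ Icc (0:ℝ) 1 := ⟨ht.1.le, ht.2⟩
    have h1 : ‖(T.comp (F' uhat - F' (c t))) (b - a)‖
        ≤ ‖T.comp (F' uhat - F' (c t))‖ * ‖b - a‖ := ContinuousLinearMap.le_opNorm _ _
    have h2 : ‖T.comp (F' uhat - F' (c t))‖ ≤ β * ‖uhat - c t‖ :=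
      hβ' _ (Metric.mem_ball_self (by linarith)) _ (hmem t ht')
    have h3 : ‖uhat - c t‖ ≤ (1 - t) * ra + t * rb := by
      rw [norm_sub_rev]; exact hseg t ht'
    calc ‖(T.comp (F' uhat - F' (c t))) (b - a)‖
        ≤ (β * ‖uhat - c t‖) * ‖b - a‖ := le_trans h1 (by
          apply mul_le_mul_of_nonneg_right h2 (norm_nonneg _))
      _ ≤ (β * ((1 - t) * ra + t * rb)) * ‖b - a‖ :=
          mul_le_mul_of_nonneg_right (mul_le_mul_of_nonneg_left h3 hβ.le) (norm_nonneg _)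
      _ = β * ‖b - a‖ * ((1 - t) * ra + t * rb) := by ring
  have hgint : IntervalIntegrable (fun t => β * ‖b - a‖ * ((1 - t) * ra + t * rb))
      MeasureTheory.volume 0 1 := by
    apply Continuous.intervalIntegrable; fun_prop
  calc ‖∫ t in (0:ℝ)..1, (T.comp (F' uhat - F' (c t))) (b - a)‖
      ≤ |∫ t in (0:ℝ)..1, β * ‖b - a‖ * ((1 - t) * ra + t * rb)| := by
        refine (intervalIntegral.norm_integral_le_of_norm_le h01 ?_ hgint).trans (le_abs_self _)
        filter_upwards with t ht
        exact hbound t ht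
    _ = β * ((ra + rb) / 2) * ‖b - a‖ := by
        rw [abs_of_nonneg]
        swap
        · apply intervalIntegral.integral_nonneg h01
          intro t ht
          have h4 : 0 ≤ (1 - t) * ra + t * rb :=
            add_nonneg (mul_nonneg (by linarith [ht.2]) (norm_nonneg (a - uhat)))
              (mul_nonneg ht.1 (norm_nonneg (b - uhat)))
          exact mul_nonneg (mul_nonneg hβ.le (norm_nonneg _)) h4
        have hP : ∀ t ∈ Set.uIcc (0:ℝ) 1,
            HasDerivAt (fun t : ℝ => β * ‖b - a‖ * (ra * t + (rb - ra) * (t ^ 2 / 2)))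
              (β * ‖b - a‖ * ((1 - t) * ra + t * rb)) t := by
          intro t _
          have h := (((hasDerivAt_id t).const_mul ra).add
            (((hasDerivAt_pow 2 t).div_const 2).const_mul (rb - ra))).const_mul (β * ‖b - a‖)
          refine h.congr_deriv ?_
          rw [show (2:ℕ) - 1 = 1 from rfl]
          ring
        rw [intervalIntegral.integral_eq_sub_of_hasDerivAt hP hgint]
        norm_num
        ring

private lemma nk_scalar_step (α β u v s : ℝ) (hα : 0 < α) (hβ : 0 < β)
    (hαβ : α * β ≤ 1 / 2) (hs0 : 0 ≤ s) (hsle : s ≤ 2 * α * (1 - u))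
    (hv : v ≤ u - u ^ 2 / 2) : β * (s / 2) * s + α ≤ 2 * α * (1 - v) := by
  have hsq : s * s ≤ (2 * α * (1 - u)) * (2 * α * (1 - u)) := mul_self_le_mul_self hs0 hsle
  have e1 : β * (s / 2) * s ≤ β / 2 * ((2 * α * (1 - u)) * (2 * α * (1 - u))) := by
    nlinarith [mul_le_mul_of_nonneg_left hsq (by positivity : (0:ℝ) ≤ β / 2)]
  have e3 : β / 2 * ((2 * α * (1 - u)) * (2 * α * (1 - u))) ≤ α * (1 - u) ^ 2 := by
    nlinarith [mul_nonneg (mul_nonneg hα.le (sq_nonneg (1 - u)))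
      (by linarith : (0:ℝ) ≤ 1 - 2 * (α * β))]
  have e4 : α + α * (1 - u) ^ 2 ≤ 2 * α * (1 - v) := by
    nlinarith [mul_le_mul_of_nonneg_left hv hα.le]
  linarith

private lemma nk_scalar_fac (α β u s r : ℝ) (hα : 0 < α) (hβ : 0 < β)
    (hαβ : α * β ≤ 1 / 2) (hu : 0 ≤ u) (hu1 : u ≤ 1)
    (hsle : s ≤ 2 * α * (1 - u)) (hr : r ≤ 2 * α) :
    β * ((s + r) / 2) ≤ 1 - u / 2 := by
  have hb1 : β * s ≤ β * (2 * α * (1 - u)) := mul_le_mul_of_nonneg_left hsle hβ.le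
  have hb2 : β * r ≤ β * (2 * α) := mul_le_mul_of_nonneg_left hr hβ.le
  nlinarith [mul_nonneg (by linarith : (0:ℝ) ≤ 1 / 2 - α * β) (by linarith : (0:ℝ) ≤ 1 - u)]

private lemma nk_scalar_final (d e f B : ℝ) (hd : 0 < d) (htri : d ≤ e + f)
    (he0 : 0 ≤ e) (hf0 : 0 ≤ f) (he : e ^ 2 ≤ B) (hf : f ^ 2 ≤ B) (hB : B < d ^ 2 / 4) :
    False := by
  nlinarith [mul_self_le_mul_self hd.le htri, sq_nonneg (e - f)]

private lemma nk_scalar_dec (w : ℝ) (hw : 1 ≤ w) :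
    (1 - 1 / (2 * w)) ^ 2 * (1 / w) ≤ 1 / (w + 1) := by
  have hw0 : (0:ℝ) < w := by linarith
  have h1 : (1 - 1 / (2 * w)) = (2 * w - 1) / (2 * w) := by field_simp
  rw [h1, div_pow, div_mul_div_comm, div_le_div_iff₀ (by positivity) (by positivity)]
  nlinarith [hw, sq_nonneg w]

private noncomputable def nkSeq {X Y : Type*} [NormedAddCommGroup X] [NormedSpace ℝ X]
    [NormedAddCommGroup Y] [NormedSpace ℝ Y] (T : Y →L[ℝ] X) (F : X → Y) (uhat : X) : ℕ → X
  | 0 => uhat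
  | n + 1 => nkSeq T F uhat n - T (F (nkSeq T F uhat n))

/-- Affine-invariant Newton–Kantorovich theorem (uniqueness part). -/
theorem newton_kantorovich_uniqueness
    {X Y : Type*} [NormedAddCommGroup X] [NormedSpace ℝ X] [CompleteSpace X]
    [NormedAddCommGroup Y] [NormedSpace ℝ Y] [CompleteSpace Y]
    (uhat : X) (α β δ : ℝ) (hα : 0 < α) (hβ : 0 < β) (hδ : 0 < δ)
    (F : X → Y) (F' : X → X →L[ℝ] Y)
    (hderiv : ∀ v ∈ Metric.ball uhat (2 * α + δ), HasFDerivAt F (F' v) v)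
    (A : X ≃L[ℝ] Y) (hA : (A : X →L[ℝ] Y) = F' uhat)
    (hα' : ‖(A.symm : Y →L[ℝ] X) (F uhat)‖ ≤ α)
    (hβ' : ∀ v ∈ Metric.ball uhat (2 * α + δ), ∀ w ∈ Metric.ball uhat (2 * α + δ),
      ‖(A.symm : Y →L[ℝ] X).comp (F' v - F' w)‖ ≤ β * ‖v - w‖)
    (hαβ : α * β ≤ 1 / 2) :
    ∀ u₁ ∈ Metric.closedBall uhat (2 * α), ∀ u₂ ∈ Metric.closedBall uhat (2 * α),
      F u₁ = 0 → F u₂ = 0 → u₁ = u₂ := by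
  intro u₁ hu₁ u₂ hu₂ hF1 hF2
  have hmem2 : ∀ z : X, ‖z - uhat‖ ≤ 2 * α → z ∈ Metric.closedBall uhat (2 * α) := by
    intro z h; rwa [Metric.mem_closedBall, dist_eq_norm]
  -- the simplified Newton (chord) iteration
  set x : ℕ → X := nkSeq (A.symm : Y →L[ℝ] X) F uhat with hxdef
  have hx0 : x 0 = uhat := rfl
  have hxs : ∀ n, x (n + 1) = x n - (A.symm : Y →L[ℝ] X) (F (x n)) := fun n => rfl
  have harith : ∀ n : ℕ, 1 / ((n : ℝ) + 2) ≤ 1 / ((n : ℝ) + 1) - 1 / (2 * ((n : ℝ) + 1) ^ 2) := by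
    intro n
    have h1 : (0:ℝ) < (n : ℝ) + 1 := by positivity
    have h2 : (0:ℝ) < (n : ℝ) + 2 := by positivity
    rw [div_sub_div _ _ (by positivity) (by positivity), div_le_div_iff₀ h2 (by positivity)]
    nlinarith [sq_nonneg ((n:ℝ))]
  -- distance of the chord iterates to the center
  have hs : ∀ n : ℕ, ‖x n - uhat‖ ≤ 2 * α * (1 - 1 / ((n : ℝ) + 1)) := by
    intro n
    induction n with
    | zero => norm_num [hx0]
    | succ n ih =>
      have h1 : (0:ℝ) < (n : ℝ) + 1 := by positivity
      have hupos : (0:ℝ) < 1 / ((n : ℝ) + 1) := by positivity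
      have h2au : (0:ℝ) ≤ 2 * α * (1 / ((n : ℝ) + 1)) := by positivity
      have hsle : ‖x n - uhat‖ ≤ 2 * α := by linarith [ih, h2au]
      have hxn : x n ∈ Metric.closedBall uhat (2 * α) := hmem2 _ hsle
      have hkey := nk_key uhat α β δ hα hβ hδ F F' hderiv A hA hβ' uhat (x n)
        (Metric.mem_closedBall_self (by positivity)) hxn
      simp only [sub_self, norm_zero, zero_add] at hkey
      have heq : x (n + 1) - uhat
          = ((x n - uhat) - (A.symm : Y →L[ℝ] X) (F (x n) - F uhat))
            - (A.symm : Y →L[ℝ] X) (F uhat) := by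
        rw [hxs n, map_sub]; abel
      have htri : ‖x (n + 1) - uhat‖
          ≤ ‖(x n - uhat) - (A.symm : Y →L[ℝ] X) (F (x n) - F uhat)‖
            + ‖(A.symm : Y →L[ℝ] X) (F uhat)‖ := by
        rw [heq]; exact norm_sub_le _ _
      have hsq : ‖x n - uhat‖ * ‖x n - uhat‖
          ≤ (2 * α * (1 - 1 / ((n : ℝ) + 1))) * (2 * α * (1 - 1 / ((n : ℝ) + 1))) :=
        mul_self_le_mul_self (norm_nonneg _) ih
      have hu1 : 1 / ((n : ℝ) + 1) ≤ 1 := by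
        rw [div_le_one h1]; linarith
      have hcast : ((n + 1 : ℕ) : ℝ) + 1 = (n : ℝ) + 2 := by push_cast; ring
      rw [hcast]
      have harithn := harith n
      have hsqinv : 1 / (2 * ((n : ℝ) + 1) ^ 2) = (1 / ((n : ℝ) + 1)) ^ 2 / 2 := by
        field_simp
      rw [hsqinv] at harithn
      have hstep := nk_scalar_step α β (1 / ((n : ℝ) + 1)) (1 / ((n : ℝ) + 2))
        ‖x n - uhat‖ hα hβ hαβ (norm_nonneg _) ih (by linarith [harithn])
      linarith [htri, hkey, hα', hstep]
  -- contraction of the error of any solution in the closed ball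
  have herr : ∀ u ∈ Metric.closedBall uhat (2 * α), F u = 0 →
      ∀ n : ℕ, ‖u - x n‖ ^ 2 ≤ 4 * α ^ 2 * (1 / ((n : ℝ) + 1)) := by
    intro u hu hFu n
    have hru : ‖u - uhat‖ ≤ 2 * α := by rwa [Metric.mem_closedBall, dist_eq_norm] at hu
    induction n with
    | zero =>
      simp only [hx0, Nat.cast_zero, zero_add, div_one]
      rw [sq]
      linarith [mul_self_le_mul_self (norm_nonneg (u - uhat)) hru]
    | succ n ih =>
      have h1 : (0:ℝ) < (n : ℝ) + 1 := by positivity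
      have hupos : (0:ℝ) < 1 / ((n : ℝ) + 1) := by positivity
      have hsn := hs n
      have h2au : (0:ℝ) ≤ 2 * α * (1 / ((n : ℝ) + 1)) := by positivity
      have hsle : ‖x n - uhat‖ ≤ 2 * α := by linarith [hsn, h2au]
      have hxn : x n ∈ Metric.closedBall uhat (2 * α) := hmem2 _ hsle
      have hkey := nk_key uhat α β δ hα hβ hδ F F' hderiv A hA hβ' (x n) u hxn hu
      have heq : u - x (n + 1) = (u - x n) - (A.symm : Y →L[ℝ] X) (F u - F (x n)) := by
        rw [hxs n, hFu, map_sub, map_zero]; abel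
      have hstep : ‖u - x (n + 1)‖ ≤ (1 - 1 / (2 * ((n : ℝ) + 1))) * ‖u - x n‖ := by
        rw [heq]
        refine hkey.trans ?_
        have hfac : β * ((‖x n - uhat‖ + ‖u - uhat‖) / 2) ≤ 1 - 1 / (2 * ((n : ℝ) + 1)) := by
          have hu1 : 1 / ((n : ℝ) + 1) ≤ 1 := by
            rw [div_le_one h1]; linarith
          have hfac' := nk_scalar_fac α β (1 / ((n : ℝ) + 1)) ‖x n - uhat‖ ‖u - uhat‖
            hα hβ hαβ hupos.le hu1 hsn hru
          have h2inv : 1 / (2 * ((n : ℝ) + 1)) = (1 / ((n : ℝ) + 1)) / 2 := by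
            field_simp
          rw [h2inv]
          linarith [hfac']
        exact mul_le_mul_of_nonneg_right hfac (norm_nonneg _)
      have hfacnn : (0:ℝ) ≤ 1 - 1 / (2 * ((n : ℝ) + 1)) := by
        have : 1 / (2 * ((n : ℝ) + 1)) ≤ 1 := by
          rw [div_le_one (by positivity)]; linarith
        linarith
      have hsq : ‖u - x (n + 1)‖ ^ 2
          ≤ (1 - 1 / (2 * ((n : ℝ) + 1))) ^ 2 * ‖u - x n‖ ^ 2 := by
        have := mul_self_le_mul_self (norm_nonneg _) hstep
        calc ‖u - x (n + 1)‖ ^ 2 = ‖u - x (n + 1)‖ * ‖u - x (n + 1)‖ := by ring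
          _ ≤ _ := this
          _ = (1 - 1 / (2 * ((n : ℝ) + 1))) ^ 2 * ‖u - x n‖ ^ 2 := by ring
      have hdec : (1 - 1 / (2 * ((n : ℝ) + 1))) ^ 2 * (1 / ((n : ℝ) + 1)) ≤ 1 / ((n : ℝ) + 2) := by
        have := nk_scalar_dec ((n : ℝ) + 1) (by linarith [Nat.cast_nonneg (α := ℝ) n])
        calc (1 - 1 / (2 * ((n : ℝ) + 1))) ^ 2 * (1 / ((n : ℝ) + 1))
            ≤ 1 / (((n : ℝ) + 1) + 1) := this
          _ = 1 / ((n : ℝ) + 2) := by ring_nf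
      have hcast : ((n + 1 : ℕ) : ℝ) + 1 = (n : ℝ) + 2 := by push_cast; ring
      rw [hcast]
      calc ‖u - x (n + 1)‖ ^ 2 ≤ (1 - 1 / (2 * ((n : ℝ) + 1))) ^ 2 * ‖u - x n‖ ^ 2 := hsq
        _ ≤ (1 - 1 / (2 * ((n : ℝ) + 1))) ^ 2 * (4 * α ^ 2 * (1 / ((n : ℝ) + 1))) :=
            mul_le_mul_of_nonneg_left ih (by positivity)
        _ = 4 * α ^ 2 * ((1 - 1 / (2 * ((n : ℝ) + 1))) ^ 2 * (1 / ((n : ℝ) + 1))) := by ring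
        _ ≤ 4 * α ^ 2 * (1 / ((n : ℝ) + 2)) := by
            apply mul_le_mul_of_nonneg_left hdec (by positivity)
  -- conclusion
  by_contra hne
  have hd : 0 < ‖u₁ - u₂‖ := by
    rw [norm_pos_iff, sub_ne_zero]; exact hne
  obtain ⟨n, hn⟩ := exists_nat_gt (16 * α ^ 2 / ‖u₁ - u₂‖ ^ 2)
  have h1 : (0:ℝ) < (n : ℝ) + 1 := by positivity
  have hB : 4 * α ^ 2 * (1 / ((n : ℝ) + 1)) < ‖u₁ - u₂‖ ^ 2 / 4 := by
    have hd2 : (0:ℝ) < ‖u₁ - u₂‖ ^ 2 := by positivity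
    rw [div_lt_iff₀ hd2] at hn
    rw [mul_one_div, div_lt_div_iff₀ h1 (by norm_num : (0:ℝ) < 4)]
    linarith [hn, hd2]
  have he1 := herr u₁ hu₁ hF1 n
  have he2 := herr u₂ hu₂ hF2 n
  have htri : ‖u₁ - u₂‖ ≤ ‖u₁ - x n‖ + ‖u₂ - x n‖ := by
    calc ‖u₁ - u₂‖ = ‖(u₁ - x n) - (u₂ - x n)‖ := by rw [sub_sub_sub_cancel_right]
      _ ≤ ‖u₁ - x n‖ + ‖u₂ - x n‖ := norm_sub_le _ _
  exact nk_scalar_final ‖u₁ - u₂‖ ‖u₁ - x n‖ ‖u₂ - x n‖ (4 * α ^ 2 * (1 / ((n : ℝ) + 1)))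
    hd htri (norm_nonneg _) (norm_nonneg _) he1 he2 hB
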